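/- Let H be a real Hilbert space, V a proper closed subspace with finite-dimensional orthogonal complement V⊥, and A : H → H a bounded self-adjoint injective linear operator. Define A11 := P_{V⊥} ∘ A restricted to V⊥ (self-adjoint on V⊥), A12 := P_{V⊥} ∘ A restricted to V, and T12 := P_{ker A11} ∘ A12 : V → ker A11, where P_{ker A11} is the orthogonal projection of V⊥ onto ker A11. Then: (i) the adjoint T12* : ker A11 → V is injective, the range of T12 equals ker A11, and if V is infinite-dimensional then ker T12 ≠ {0}; (ii) the restriction Ã11 of A11 to the range of A11 (which is a closed subspace of V⊥, equal to the orthogonal complement of ker A11 in V⊥) is a self-adjoint, invertible operator on that subspace. -/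

import Mathlib

set_option synthInstance.maxHeartbeats 1000000
set_option maxHeartbeats 2000000

/-- **Key algebraic lemma for the canonical-form reduction (Lemma 2.1).**
For `A` bounded self-adjoint injective, `A11 = P_{V⊥} A |_{V⊥}`, `A12 = P_{V⊥} A |_V` and
`T12 = P_{ker A11} ∘ A12`: (i) `T12*` is injective, `im T12 = ker A11`, and `ker T12 ≠ 0`
when `V` is infinite-dimensional; (ii) the restriction of `A11` to `im A11 = (ker A11)ᗮ`
is self-adjoint and invertible on that subspace. -/
theorem canonical_reduction_algebra
    {H : Type*} [NormedAddCommGroup H] [InnerProductSpace ℝ H] [CompleteSpace H]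
    (V : Submodule ℝ H) (hVclosed : IsClosed (V : Set H)) (hVproper : V ≠ ⊤)
    [CompleteSpace ↥V] [FiniteDimensional ℝ ↥Vᗮ]
    (A : H →L[ℝ] H) (hA : IsSelfAdjoint A) (hAinj : Function.Injective A)
    (A11 : ↥Vᗮ →L[ℝ] ↥Vᗮ)
    (hA11 : A11 = (Submodule.orthogonalProjectionOnto Vᗮ).comp (A.comp Vᗮ.subtypeL))
    (A12 : ↥V →L[ℝ] ↥Vᗮ)
    (hA12 : A12 = (Submodule.orthogonalProjectionOnto Vᗮ).comp (A.comp V.subtypeL))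
    (T12 : ↥V →L[ℝ] ↥(LinearMap.ker (A11 : ↥Vᗮ →ₗ[ℝ] ↥Vᗮ)))
    (hT12 : T12 = (Submodule.orthogonalProjectionOnto (LinearMap.ker (A11 : ↥Vᗮ →ₗ[ℝ] ↥Vᗮ))).comp A12) :
    -- (i)
    Function.Injective (ContinuousLinearMap.adjoint (𝕜 := ℝ) (E := ↥V) (F := ↥(LinearMap.ker (A11 : ↥Vᗮ →ₗ[ℝ] ↥Vᗮ))) T12) ∧
    LinearMap.range (T12 : ↥V →ₗ[ℝ] ↥(LinearMap.ker (A11 : ↥Vᗮ →ₗ[ℝ] ↥Vᗮ))) = ⊤ ∧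
    (¬ FiniteDimensional ℝ ↥V → LinearMap.ker (T12 : ↥V →ₗ[ℝ] ↥(LinearMap.ker (A11 : ↥Vᗮ →ₗ[ℝ] ↥Vᗮ))) ≠ ⊥) ∧
    -- (ii)
    LinearMap.range (A11 : ↥Vᗮ →ₗ[ℝ] ↥Vᗮ) = (LinearMap.ker (A11 : ↥Vᗮ →ₗ[ℝ] ↥Vᗮ))ᗮ ∧
    ∃ At : ↥(LinearMap.range (A11 : ↥Vᗮ →ₗ[ℝ] ↥Vᗮ)) →L[ℝ] ↥(LinearMap.range (A11 : ↥Vᗮ →ₗ[ℝ] ↥Vᗮ)),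
      (∀ x : ↥(LinearMap.range (A11 : ↥Vᗮ →ₗ[ℝ] ↥Vᗮ)), (At x : ↥Vᗮ) = A11 (x : ↥Vᗮ)) ∧
      (∀ x y : ↥(LinearMap.range (A11 : ↥Vᗮ →ₗ[ℝ] ↥Vᗮ)),
        (inner ℝ ((At x : ↥Vᗮ)) ((y : ↥Vᗮ)) : ℝ) = inner ℝ ((x : ↥Vᗮ)) ((At y : ↥Vᗮ))) ∧
      Function.Bijective At := by
  have hAsym : ∀ x y : H, (inner ℝ (A x) y : ℝ) = inner ℝ x (A y) :=
    fun x y => (ContinuousLinearMap.isSelfAdjoint_iff_isSymmetric.1 hA) x y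
  -- symmetry of A11
  have hSym : ∀ x y : ↥Vᗮ, (inner ℝ (A11 x) y : ℝ) = inner ℝ x (A11 y) := by
    intro x y
    rw [hA11]
    simp only [ContinuousLinearMap.comp_apply, Submodule.subtypeL_apply]
    rw [Submodule.inner_orthogonalProjectionOnto_eq_of_mem_right, Submodule.inner_orthogonalProjectionOnto_eq_of_mem_left]
    exact hAsym _ _
  -- inner product formula for T12
  have hTinner : ∀ (v : ↥V) (r : ↥(LinearMap.ker (A11 : ↥Vᗮ →ₗ[ℝ] ↥Vᗮ))),
      (inner ℝ (T12 v) r : ℝ) = inner ℝ (v : H) (A ((r : ↥Vᗮ) : H)) := by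
    intro v r
    rw [hT12]
    simp only [ContinuousLinearMap.comp_apply]
    rw [Submodule.inner_orthogonalProjectionOnto_eq_of_mem_right, hA12]
    simp only [ContinuousLinearMap.comp_apply, Submodule.subtypeL_apply]
    rw [Submodule.inner_orthogonalProjectionOnto_eq_of_mem_right]
    exact hAsym _ _
  -- key injectivity fact for the adjoint
  have hadj0 : ∀ r : ↥(LinearMap.ker (A11 : ↥Vᗮ →ₗ[ℝ] ↥Vᗮ)), ContinuousLinearMap.adjoint (𝕜 := ℝ) (E := ↥V) (F := ↥(LinearMap.ker (A11 : ↥Vᗮ →ₗ[ℝ] ↥Vᗮ))) T12 r = 0 → r = 0 := by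
    intro r hr
    have h1 : ∀ v : ↥V, (inner ℝ (v : H) (A ((r : ↥Vᗮ) : H)) : ℝ) = 0 := by
      intro v
      have h2 := ContinuousLinearMap.adjoint_inner_right (𝕜 := ℝ) (E := ↥V) (F := ↥(LinearMap.ker (A11 : ↥Vᗮ →ₗ[ℝ] ↥Vᗮ))) T12 v r
      rw [hr, inner_zero_right] at h2
      rw [← hTinner v r, ← h2]
    have hmem : A ((r : ↥Vᗮ) : H) ∈ Vᗮ := by
      rw [Submodule.mem_orthogonal]
      intro u hu
      exact h1 ⟨u, hu⟩
    have hcoe : (((Submodule.orthogonalProjectionOnto Vᗮ) (A ((r : ↥Vᗮ) : H))) : H) = A ((r : ↥Vᗮ) : H) :=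
      Submodule.starProjection_eq_self_iff.2 hmem
    have heq := congrArg (fun f : ↥Vᗮ →L[ℝ] ↥Vᗮ => f (r : ↥Vᗮ)) hA11
    simp only [ContinuousLinearMap.comp_apply, Submodule.subtypeL_apply] at heq
    have hA0 : A ((r : ↥Vᗮ) : H) = 0 := by
      rw [← hcoe, ← heq, (show A11 (r : ↥Vᗮ) = 0 from LinearMap.mem_ker.mp r.2), Submodule.coe_zero]
    have h0 : ((r : ↥Vᗮ) : H) = 0 := hAinj (by rw [hA0, map_zero])
    ext
    exact h0
  have hinj : Function.Injective (ContinuousLinearMap.adjoint (𝕜 := ℝ) (E := ↥V) (F := ↥(LinearMap.ker (A11 : ↥Vᗮ →ₗ[ℝ] ↥Vᗮ))) T12) := by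
    intro a b hab
    have h : ContinuousLinearMap.adjoint (𝕜 := ℝ) (E := ↥V) (F := ↥(LinearMap.ker (A11 : ↥Vᗮ →ₗ[ℝ] ↥Vᗮ))) T12 (a - b) = 0 := by
      rw [map_sub, hab, sub_self]
    have := hadj0 _ h
    rwa [sub_eq_zero] at this
  -- range T12 = ⊤
  have hrangeT : LinearMap.range (T12 : ↥V →ₗ[ℝ] ↥(LinearMap.ker (A11 : ↥Vᗮ →ₗ[ℝ] ↥Vᗮ))) = ⊤ := by
    have horth : Submodule.orthogonal (𝕜 := ℝ) (E := ↥(LinearMap.ker (A11 : ↥Vᗮ →ₗ[ℝ] ↥Vᗮ))) (LinearMap.range (T12 : ↥V →ₗ[ℝ] ↥(LinearMap.ker (A11 : ↥Vᗮ →ₗ[ℝ] ↥Vᗮ)))) = ⊥ := by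
      rw [Submodule.eq_bot_iff]
      intro r hr
      apply hadj0
      refine ext_inner_left ℝ fun v => ?_
      rw [inner_zero_right, ContinuousLinearMap.adjoint_inner_right]
      exact (Submodule.mem_orthogonal _ r).1 hr _ ⟨v, rfl⟩
    have := congrArg (fun W => Submodule.orthogonal (𝕜 := ℝ) (E := ↥(LinearMap.ker (A11 : ↥Vᗮ →ₗ[ℝ] ↥Vᗮ))) W) horth
    simpa [Submodule.orthogonal_orthogonal] using this
  -- ker A11 = (range A11)ᗮ
  have hker_orth : LinearMap.ker (A11 : ↥Vᗮ →ₗ[ℝ] ↥Vᗮ) = (LinearMap.range (A11 : ↥Vᗮ →ₗ[ℝ] ↥Vᗮ))ᗮ := by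
    ext x
    rw [LinearMap.mem_ker, Submodule.mem_orthogonal]
    constructor
    · rintro hx u ⟨y, rfl⟩
      simp only [ContinuousLinearMap.coe_coe] at hx ⊢
      rw [hSym y x, hx, inner_zero_right]
    · intro hx
      rw [← inner_self_eq_zero (𝕜 := ℝ)]
      have h := hx (A11 (A11 x)) ⟨A11 x, rfl⟩
      rwa [hSym (A11 x) x] at h
  -- range A11 = (ker A11)ᗮ
  have hrangeA : LinearMap.range (A11 : ↥Vᗮ →ₗ[ℝ] ↥Vᗮ) = (LinearMap.ker (A11 : ↥Vᗮ →ₗ[ℝ] ↥Vᗮ))ᗮ := by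
    rw [hker_orth, Submodule.orthogonal_orthogonal]
  -- ker T12 nontrivial when V infinite dimensional
  have hkerT : ¬ FiniteDimensional ℝ ↥V → LinearMap.ker (T12 : ↥V →ₗ[ℝ] ↥(LinearMap.ker (A11 : ↥Vᗮ →ₗ[ℝ] ↥Vᗮ))) ≠ ⊥ := by
    intro hinf hbot
    exact hinf (FiniteDimensional.of_injective T12.toLinearMap
      (LinearMap.ker_eq_bot.mp hbot))
  refine ⟨hinj, hrangeT, hkerT, hrangeA, ?_⟩
  -- construct the restricted operator
  have hmaps : ∀ x ∈ LinearMap.range (A11 : ↥Vᗮ →ₗ[ℝ] ↥Vᗮ), A11 x ∈ LinearMap.range (A11 : ↥Vᗮ →ₗ[ℝ] ↥Vᗮ) := fun x _ => ⟨x, rfl⟩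
  set At := LinearMap.toContinuousLinearMap
    ((A11 : ↥Vᗮ →ₗ[ℝ] ↥Vᗮ).restrict hmaps) with hAt
  have hAtinj : Function.Injective At := by
    intro x y hxy
    have h : A11 ((x : ↥Vᗮ) - (y : ↥Vᗮ)) = 0 := by
      have : A11 (x : ↥Vᗮ) = A11 (y : ↥Vᗮ) := congrArg Subtype.val hxy
      rw [map_sub, this, sub_self]
    have hmem : (x : ↥Vᗮ) - (y : ↥Vᗮ) ∈ (LinearMap.ker (A11 : ↥Vᗮ →ₗ[ℝ] ↥Vᗮ))ᗮ := by
      rw [← hrangeA]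
      exact Submodule.sub_mem _ x.2 y.2
    have h0 : (x : ↥Vᗮ) - (y : ↥Vᗮ) = 0 := by
      rw [← inner_self_eq_zero (𝕜 := ℝ)]
      exact (Submodule.mem_orthogonal _ _).1 hmem _ h
    ext
    exact congrArg Subtype.val (sub_eq_zero.mp h0)
  have hAtsurj : Function.Surjective At :=
    LinearMap.injective_iff_surjective.mp hAtinj
  exact ⟨At, fun x => rfl, fun x y => hSym _ _, hAtinj, hAtsurj⟩
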